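/- Let F(z) = Σ_{i=0}^∞ F_i z^i be a power series with complex coefficients that converges on the closed unit disk (e.g. F is analytic on a neighborhood of the closed unit disk), let a and m be positive integers, and let t ∈ ℂ with |t| < 1. Then (1/(2π√−1)) ∮_{|z|=1} F(z)·(1 − t z^{−a})^{−m} · dz/z = Σ_{i=0}^∞ C(m−1+i, m−1) F_{ia} t^i = (1/(m−1)!) · (D_{m−1}(U_a F))(t), where C(·,·) is the binomial coefficient, U_a F is the power series (U_a F)(t) = Σ_{i=0}^∞ F_{ia} t^i, and D_n is the operator taking a function G to the n-th derivative of t^n·G(t). -/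

import Mathlib

open scoped BigOperators

noncomputable section

open Filter Metric MeasureTheory Real Complex

private lemma aux_summable_desc (c : ℕ → ℂ) (hc : Summable fun i => ‖c i‖) (n : ℕ)
    {r : ℝ} (hr0 : 0 ≤ r) (hr1 : r < 1) :
    Summable fun i : ℕ => (i.descFactorial n : ℝ) * ‖c i‖ * r ^ (i - n) := by
  set ρ : ℝ := max r (1/2) with hρ
  have hρ0 : 0 < ρ := lt_max_of_lt_right (by norm_num)
  have hρ1 : ρ < 1 := max_lt hr1 (by norm_num)
  have hC : ∀ i, ‖c i‖ ≤ ∑' j, ‖c j‖ := fun i => Summable.le_tsum hc i (fun j _ => norm_nonneg _)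
  have hsum : Summable fun i : ℕ => ((∑' j, ‖c j‖) / ρ ^ n) * ((i : ℝ) ^ n * ρ ^ i) :=
    (summable_pow_mul_geometric_of_norm_lt_one n (r := ρ)
      (by rwa [Real.norm_eq_abs, abs_of_pos hρ0])).mul_left _
  apply hsum.of_nonneg_of_le
  · intro i
    positivity
  · intro i
    have h1 : (i.descFactorial n : ℝ) ≤ (i : ℝ) ^ n := by
      exact_mod_cast Nat.descFactorial_le_pow i n
    have h2 : r ^ (i - n) ≤ ρ ^ i / ρ ^ n := by
      have hrρ : r ^ (i - n) ≤ ρ ^ (i - n) := pow_le_pow_left₀ hr0 (le_max_left _ _) _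
      refine hrρ.trans ?_
      rw [div_eq_mul_inv, ← zpow_natCast ρ i, ← zpow_natCast ρ n, ← zpow_neg,
        ← zpow_add₀ hρ0.ne']
      calc ρ ^ (i - n) = ρ ^ ((i - n : ℕ) : ℤ) := by rw [zpow_natCast]
        _ ≤ ρ ^ ((i : ℤ) - n) := by
            apply zpow_le_zpow_right_of_le_one₀ hρ0 hρ1.le
            omega
        _ = ρ ^ ((i : ℤ) + -(n:ℤ)) := by ring_nf
    calc (i.descFactorial n : ℝ) * ‖c i‖ * r ^ (i - n)
        ≤ (i:ℝ)^n * (∑' j, ‖c j‖) * (ρ ^ i / ρ ^ n) := by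
          apply mul_le_mul (mul_le_mul h1 (hC i) (norm_nonneg _) (by positivity)) h2
            (by positivity) (mul_nonneg (by positivity) (tsum_nonneg fun j => norm_nonneg _))
      _ = ((∑' j, ‖c j‖) / ρ ^ n) * ((i : ℝ) ^ n * ρ ^ i) := by ring

private lemma aux_iteratedDeriv_tsum (c : ℕ → ℂ) (hc : Summable fun i => ‖c i‖) (n : ℕ) :
    ∀ t : ℂ, ‖t‖ < 1 →
      iteratedDeriv n (fun s : ℂ => ∑' i, c i * s ^ i) t
        = ∑' i : ℕ, (i.descFactorial n : ℂ) * c i * t ^ (i - n) := by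
  induction n with
  | zero => intro t ht; simp
  | succ n ih =>
    intro t ht
    rw [iteratedDeriv_succ]
    have htball : t ∈ ball (0 : ℂ) 1 := by simpa [mem_ball, dist_eq_norm] using ht
    have hEq : (iteratedDeriv n fun s : ℂ => ∑' i, c i * s ^ i) =ᶠ[nhds t]
        fun s : ℂ => ∑' i : ℕ, (i.descFactorial n : ℂ) * c i * s ^ (i - n) := by
      filter_upwards [isOpen_ball.mem_nhds htball] with s hs
      exact ih s (by simpa [mem_ball, dist_eq_norm] using hs)
    rw [hEq.deriv_eq]
    set r : ℝ := (1 + ‖t‖) / 2 with hr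
    have hr0 : 0 < r := by positivity
    have htr : ‖t‖ < r := by rw [hr]; linarith
    have hr1 : r < 1 := by rw [hr]; linarith
    have key : HasDerivAt (fun s : ℂ => ∑' i : ℕ, (i.descFactorial n : ℂ) * c i * s ^ (i - n))
        (∑' i : ℕ, (i.descFactorial n : ℂ) * c i * ((i - n : ℕ) * t ^ (i - n - 1))) t := by
      apply hasDerivAt_tsum_of_isPreconnected
        (u := fun i : ℕ => (i.descFactorial (n+1) : ℝ) * ‖c i‖ * r ^ (i - (n+1)))
        (aux_summable_desc c hc (n+1) hr0.le hr1)
        isOpen_ball (convex_ball (0:ℂ) r).isPreconnected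
        (g' := fun i y => (i.descFactorial n : ℂ) * c i * ((i - n : ℕ) * y ^ (i - n - 1)))
        (fun i y _ => (hasDerivAt_pow (i - n) y).const_mul _)
        ?_ (mem_ball_zero_iff.2 htr) ?_ (mem_ball_zero_iff.2 htr)
      · intro i y hy
        have hy' : ‖y‖ ≤ r := (mem_ball_zero_iff.1 hy).le
        have : ‖y ^ (i - n - 1)‖ ≤ r ^ (i - n - 1) := by
          rw [norm_pow]; exact pow_le_pow_left₀ (norm_nonneg _) hy' _
        calc ‖(i.descFactorial n : ℂ) * c i * ((i - n : ℕ) * y ^ (i - n - 1))‖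
            = (i.descFactorial n : ℝ) * ‖c i‖ * ((i - n : ℕ) * ‖y ^ (i - n - 1)‖) := by
              simp [norm_mul, mul_assoc]
          _ ≤ (i.descFactorial n : ℝ) * ‖c i‖ * ((i - n : ℕ) * r ^ (i - n - 1)) := by
              gcongr
          _ = (i.descFactorial (n+1) : ℝ) * ‖c i‖ * r ^ (i - (n+1)) := by
              rw [Nat.descFactorial_succ]
              push_cast
              rw [Nat.sub_sub]
              ring
      · apply Summable.of_norm
        have := aux_summable_desc c hc n (norm_nonneg t) ht
        apply this.congr
        intro i
        simp [norm_mul, norm_pow, mul_assoc]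
    rw [key.deriv]
    apply tsum_congr
    intro i
    rw [Nat.descFactorial_succ]
    push_cast
    rw [Nat.sub_sub]
    ring

private lemma aux_part2 (c : ℕ → ℂ) (hc : Summable fun i => ‖c i‖) (n : ℕ) (t : ℂ)
    (ht : ‖t‖ < 1) :
    (∑' i : ℕ, ((n + i).choose n : ℂ) * c i * t ^ i) =
      (n.factorial : ℂ)⁻¹ * iteratedDeriv n (fun s : ℂ => s ^ n * ∑' i : ℕ, c i * s ^ i) t := by
  set d : ℕ → ℂ := fun j => if n ≤ j then c (j - n) else 0 with hd_def
  have hdg : ∀ i : ℕ, d (n + i) = c i := by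
    intro i; simp [hd_def]
  have hd : Summable fun j => ‖d j‖ := by
    rw [← Function.Injective.summable_iff (add_right_injective n) (f := fun j => ‖d j‖)]
    · apply hc.congr; intro i; simp [Function.comp, hdg]
    · intro j hj
      have : ¬ n ≤ j := by
        intro h; exact hj ⟨j - n, by simp; omega⟩
      simp [hd_def, this]
  have hfun : (fun s : ℂ => s ^ n * ∑' i : ℕ, c i * s ^ i) =ᶠ[nhds t]
      fun s : ℂ => ∑' j : ℕ, d j * s ^ j := by
    have htball : t ∈ ball (0 : ℂ) 1 := by simpa [mem_ball, dist_eq_norm] using ht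
    filter_upwards [isOpen_ball.mem_nhds htball] with s hs
    have : ∑' j : ℕ, d j * s ^ j = ∑' i : ℕ, d (n + i) * s ^ (n + i) := by
      refine (Function.Injective.tsum_eq (add_right_injective n) ?_).symm
      intro j hj
      have hnj : n ≤ j := by
        by_contra h
        simp [hd_def, h] at hj
      exact ⟨j - n, by simp; omega⟩
    rw [this]
    symm
    calc ∑' i : ℕ, d (n + i) * s ^ (n + i)
        = ∑' i : ℕ, s ^ n * (c i * s ^ i) := by
          apply tsum_congr; intro i; rw [hdg, pow_add]; ring
      _ = s ^ n * ∑' i : ℕ, c i * s ^ i := tsum_mul_left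
  rw [hfun.iteratedDeriv_eq n, aux_iteratedDeriv_tsum d hd n t ht]
  have hre : ∑' j : ℕ, (j.descFactorial n : ℂ) * d j * t ^ (j - n)
      = ∑' i : ℕ, ((n + i).descFactorial n : ℂ) * c i * t ^ i := by
    rw [← Function.Injective.tsum_eq (add_right_injective n)
      (f := fun j => (j.descFactorial n : ℂ) * d j * t ^ (j - n)) ?_]
    · apply tsum_congr; intro i
      simp only [hdg]
      congr 2
      omega
    · intro j hj
      have hnj : n ≤ j := by
        by_contra h
        simp [hd_def, h] at hj
      exact ⟨j - n, by simp; omega⟩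
  rw [hre]
  have : ∑' i : ℕ, ((n + i).descFactorial n : ℂ) * c i * t ^ i
      = ∑' i : ℕ, (n.factorial : ℂ) * (((n + i).choose n : ℂ) * c i * t ^ i) := by
    apply tsum_congr; intro i
    rw [Nat.descFactorial_eq_factorial_mul_choose]
    push_cast
    ring
  rw [this, tsum_mul_left, inv_mul_cancel_left₀ (by exact_mod_cast n.factorial_ne_zero)]

private lemma aux_pointwise (F : ℕ → ℂ)
    (hF : ∀ z : ℂ, ‖z‖ ≤ 1 → Summable fun i : ℕ => F i * z ^ i)
    (a : ℕ) (n : ℕ) (t : ℂ) (ht : ‖t‖ < 1) {z : ℂ} (hz : ‖z‖ = 1) :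
    (∑' i : ℕ, F i * z ^ i) / ((1 - t * z ^ (-(a : ℤ))) ^ (n + 1) * z) =
      ∑' p : ℕ × ℕ, F p.1 * ((p.2 + n).choose n : ℂ) * t ^ p.2 *
        z ^ ((p.1 : ℤ) - a * p.2 - 1) := by
  have hz0 : z ≠ 0 := by intro h; rw [h] at hz; simp at hz
  set w : ℂ := t * z ^ (-(a : ℤ)) with hw_def
  have hw : ‖w‖ < 1 := by
    rw [hw_def, norm_mul, norm_zpow, hz]
    simpa using ht
  have geom : HasSum (fun j : ℕ => (((j + n).choose n : ℕ) : ℂ) * w ^ j)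
      (1 / (1 - w) ^ (n + 1)) := hasSum_choose_mul_geometric_of_norm_lt_one n hw
  have hFz : Summable fun i : ℕ => ‖F i * z ^ i‖ := summable_norm_iff.2 (hF z hz.le)
  have hCz : Summable fun j : ℕ => ‖(((j + n).choose n : ℕ) : ℂ) * w ^ j‖ := by
    have : Summable fun j : ℕ => (((j + n).choose n : ℕ) : ℝ) * ‖w‖ ^ j :=
      summable_choose_mul_geometric_of_norm_lt_one n (by simpa using hw)
    apply this.congr
    intro j
    simp [norm_mul, norm_pow]
  have key : (∑' i : ℕ, F i * z ^ i) / ((1 - w) ^ (n + 1) * z)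
      = ((∑' i : ℕ, F i * z ^ i) * (∑' j : ℕ, (((j + n).choose n : ℕ) : ℂ) * w ^ j)) * z⁻¹ := by
    rw [geom.tsum_eq]
    field_simp
  rw [key, tsum_mul_tsum_of_summable_norm hFz hCz, ← tsum_mul_right]
  apply tsum_congr
  intro p
  have e1 : z ^ (p.1 : ℤ) * (z ^ (-(a : ℤ) * (p.2 : ℤ)) * z ^ (-1 : ℤ))
      = z ^ ((p.1 : ℤ) - a * p.2 - 1) := by
    rw [← zpow_add₀ hz0, ← zpow_add₀ hz0]
    congr 1
    ring
  have e2 : (z ^ (-(a : ℤ))) ^ (p.2 : ℕ) = z ^ (-(a : ℤ) * (p.2 : ℤ)) := by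
    rw [← zpow_natCast (z ^ (-(a : ℤ))) p.2, ← zpow_mul]
  calc F p.1 * z ^ p.1 * ((((p.2 + n).choose n : ℕ) : ℂ) * w ^ p.2) * z⁻¹
      = F p.1 * (((p.2 + n).choose n : ℕ) : ℂ) * t ^ p.2 *
        (z ^ (p.1 : ℤ) * (z ^ (-(a : ℤ) * (p.2 : ℤ)) * z ^ (-1 : ℤ))) := by
        rw [hw_def, mul_pow, e2, zpow_neg_one, zpow_natCast]
        ring
    _ = _ := by rw [e1]

private lemma aux_integral_single (c : ℂ) (k : ℤ) :
    (∮ z in C(0, 1), c * z ^ k) = if k = -1 then 2 * (Real.pi : ℂ) * Complex.I * c else 0 := by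
  rw [circleIntegral.integral_const_mul]
  by_cases hk : k = -1
  · subst hk
    have : (∮ z in C(0, 1), z ^ (-1 : ℤ)) = ∮ z in C(0, 1), (z - 0)⁻¹ := by
      apply circleIntegral.integral_congr one_pos.le
      intro z _
      simp [zpow_neg_one]
    rw [this, circleIntegral.integral_sub_inv_of_mem_ball (by simp)]
    simp [mul_comm]
  · have : (∮ z in C(0, 1), z ^ k) = ∮ z in C(0, 1), (z - 0) ^ k := by
      apply circleIntegral.integral_congr one_pos.le
      intro z _
      simp
    rw [this, circleIntegral.integral_sub_zpow_of_ne hk]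
    simp [hk]

private lemma aux_part1 (F : ℕ → ℂ)
    (hF : ∀ z : ℂ, ‖z‖ ≤ 1 → Summable fun i : ℕ => F i * z ^ i)
    (a : ℕ) (n : ℕ) (t : ℂ) (ht : ‖t‖ < 1) :
    (∮ z in C(0, 1), (∑' i : ℕ, F i * z ^ i) / ((1 - t * z ^ (-(a : ℤ))) ^ (n + 1) * z)) =
      2 * (Real.pi : ℂ) * Complex.I *
        ∑' j : ℕ, (((n + j).choose n : ℕ) : ℂ) * F (j * a) * t ^ j := by
  have hFn : Summable fun i : ℕ => ‖F i‖ := by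
    have := hF 1 (by simp)
    simp only [one_pow, mul_one] at this
    exact summable_norm_iff.2 this
  set g : ℕ × ℕ → ℂ → ℂ := fun p z =>
    F p.1 * ((p.2 + n).choose n : ℂ) * t ^ p.2 * z ^ ((p.1 : ℤ) - a * p.2 - 1) with hg_def
  set G : ℕ × ℕ → ℝ → ℂ := fun p θ => deriv (circleMap 0 1) θ • g p (circleMap 0 1 θ) with hG_def
  have hcm : ∀ θ : ℝ, ‖circleMap 0 1 θ‖ = 1 := by
    intro θ
    rw [norm_circleMap_zero]
    norm_num
  have hcont : ∀ p, Continuous (G p) := by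
    intro p
    have h1 : Continuous fun θ => deriv (circleMap 0 1) θ := by
      simp only [deriv_circleMap]
      exact (continuous_circleMap 0 1).mul continuous_const
    apply h1.smul
    apply continuous_const.mul
    exact (continuous_circleMap 0 1).zpow₀ _
      (fun θ => Or.inl (circleMap_ne_center one_ne_zero))
  have hGnorm : ∀ p θ, ‖G p θ‖
      = ‖F p.1‖ * ((((p.2 + n).choose n : ℕ) : ℝ) * ‖t‖ ^ p.2) := by
    intro p θ
    rw [hG_def]
    simp only [norm_smul, deriv_circleMap, hg_def, norm_mul, norm_zpow, norm_pow, hcm,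
      Complex.norm_I, Complex.norm_natCast, one_zpow, mul_one, one_mul]
    ring
  have hGint : ∀ p, IntegrableOn (G p) (Set.Icc 0 (2 * π)) volume :=
    fun p => (hcont p).integrableOn_Icc
  have hGval : ∀ p : ℕ × ℕ, (∫ θ in Set.Icc 0 (2 * π), ‖G p θ‖)
      = (2 * π) * (‖F p.1‖ * ((((p.2 + n).choose n : ℕ) : ℝ) * ‖t‖ ^ p.2)) := by
    intro p
    rw [show (fun θ => ‖G p θ‖) = fun _ : ℝ =>
        ‖F p.1‖ * ((((p.2 + n).choose n : ℕ) : ℝ) * ‖t‖ ^ p.2) from funext (hGnorm p)]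
    rw [MeasureTheory.setIntegral_const, Real.volume_real_Icc, smul_eq_mul]
    rw [max_eq_left (by linarith [Real.pi_pos])]
    ring
  have hGsum : Summable fun p : ℕ × ℕ => ∫ θ in Set.Icc 0 (2 * π), ‖G p θ‖ := by
    have hprod : Summable fun p : ℕ × ℕ =>
        (2 * π * ‖F p.1‖) * ((((p.2 + n).choose n : ℕ) : ℝ) * ‖t‖ ^ p.2) := by
      apply Summable.mul_of_nonneg (hFn.mul_left (2 * π))
        (summable_choose_mul_geometric_of_norm_lt_one n (by simpa using ht))
      · intro i; positivity
      · intro j; positivity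
    apply hprod.congr
    intro p
    rw [hGval p]
    ring
  have swap : (∮ z in C(0, 1),
        (∑' i : ℕ, F i * z ^ i) / ((1 - t * z ^ (-(a : ℤ))) ^ (n + 1) * z))
      = ∑' p : ℕ × ℕ, ∮ z in C(0, 1), g p z := by
    rw [circleIntegral_def_Icc]
    have step1 : (∫ θ in Set.Icc 0 (2 * π), deriv (circleMap 0 1) θ •
          ((∑' i : ℕ, F i * (circleMap 0 1 θ) ^ i) /
            ((1 - t * (circleMap 0 1 θ) ^ (-(a : ℤ))) ^ (n + 1) * circleMap 0 1 θ)))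
        = ∫ θ in Set.Icc 0 (2 * π), ∑' p : ℕ × ℕ, G p θ := by
      apply setIntegral_congr_fun measurableSet_Icc
      intro θ _
      dsimp only
      rw [aux_pointwise F hF a n t ht (hcm θ)]
      rw [hG_def]
      simp only [smul_eq_mul]
      rw [tsum_mul_left]
    rw [step1, ← integral_tsum_of_summable_integral_norm hGint hGsum]
    apply tsum_congr
    intro p
    rw [circleIntegral_def_Icc]
  rw [swap]
  have hval : ∀ p : ℕ × ℕ, (∮ z in C(0, 1), g p z)
      = if ((p.1 : ℤ) - a * p.2 - 1 = -1)
        then 2 * (Real.pi : ℂ) * Complex.I *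
          (F p.1 * ((p.2 + n).choose n : ℂ) * t ^ p.2) else 0 := by
    intro p
    rw [hg_def]
    exact aux_integral_single _ _
  rw [tsum_congr hval]
  have hinj : Function.Injective (fun j : ℕ => ((a * j, j) : ℕ × ℕ)) := by
    intro x y h
    exact congrArg Prod.snd h
  rw [← Function.Injective.tsum_eq hinj ?hsupp]
  case hsupp =>
    intro p hp
    have hcond : ((p.1 : ℤ) - a * p.2 - 1 = -1) := by
      by_contra h
      exact hp (if_neg h)
    have hpp : p.1 = a * p.2 := by
      have h2 : ((p.1 : ℤ)) = ((a * p.2 : ℕ) : ℤ) := by push_cast; linarith [hcond]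
      exact_mod_cast h2
    exact ⟨p.2, by simp only []; rw [← hpp]⟩
  rw [← tsum_mul_left]
  apply tsum_congr
  intro j
  have hc : (((a * j : ℕ) : ℤ) - a * j - 1 = (-1 : ℤ)) := by push_cast; ring
  rw [if_pos hc]
  rw [mul_comm a j, add_comm j n]
  ring

/-- **Proposition 6.4.** Let `F(z) = Σᵢ Fᵢ zⁱ` converge on the closed unit disk, let `a, m` be
positive integers, and `|t| < 1`.  Then
`(1/(2πi)) ∮_{|z|=1} F(z)(1 - t z^{-a})^{-m} dz/z = Σᵢ C(m-1+i, m-1) F_{i a} tⁱ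
  = (1/(m-1)!) (D_{m-1}(U_a F))(t)`,
where `(U_a F)(s) = Σᵢ F_{i a} sⁱ` and `D_n G = dⁿ/dsⁿ (sⁿ G(s))`. -/
theorem circle_integral_Ua_formula
    (F : ℕ → ℂ) (hF : ∀ z : ℂ, ‖z‖ ≤ 1 → Summable fun i : ℕ => F i * z ^ i)
    (a m : ℕ) (ha : 0 < a) (hm : 0 < m) (t : ℂ) (ht : ‖t‖ < 1) :
    (2 * (Real.pi : ℂ) * Complex.I)⁻¹ *
        (∮ z in C(0, 1), (∑' i : ℕ, F i * z ^ i) / ((1 - t * z ^ (-(a : ℤ))) ^ m * z)) =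
      (∑' i : ℕ, (Nat.choose (m - 1 + i) (m - 1) : ℂ) * F (i * a) * t ^ i) ∧
    (∑' i : ℕ, (Nat.choose (m - 1 + i) (m - 1) : ℂ) * F (i * a) * t ^ i) =
      ((m - 1).factorial : ℂ)⁻¹ *
        iteratedDeriv (m - 1) (fun s : ℂ => s ^ (m - 1) * ∑' i : ℕ, F (i * a) * s ^ i) t := by
  obtain ⟨n, rfl⟩ : ∃ n, m = n + 1 := ⟨m - 1, by omega⟩
  simp only [Nat.add_sub_cancel]
  have hFn : Summable fun i : ℕ => ‖F i‖ := by
    have := hF 1 (by simp)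
    simp only [one_pow, mul_one] at this
    exact summable_norm_iff.2 this
  have hinj : Function.Injective (fun i : ℕ => i * a) := by
    intro x y h
    exact Nat.eq_of_mul_eq_mul_right ha h
  have hc : Summable fun i : ℕ => ‖F (i * a)‖ := hFn.comp_injective hinj
  constructor
  · rw [aux_part1 F hF a n t ht, inv_mul_cancel_left₀]
    simp [Real.pi_ne_zero, Complex.I_ne_zero]
  · exact aux_part2 (fun i => F (i * a)) hc n t ht

end
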